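/- arXiv:1611.08574 — 3 statements merged into one kernel-verified Lean document; each statement's English description precedes it below -/
import Mathlib

section
/- Thresholding stream invariant (rejected elements have small marginal gain): Let f : Finset V → ℝ be submodular, let τ ∈ ℝ and N ∈ ℕ, and let L be a list of elements of V. If the output S = T_f(L, τ, N) satisfies |S| < N, then every element e occurring in L with e ∉ S satisfies Δ(e|S) < τ. -/
open scoped Classical

/-- The marginal gain `Δ(e|S) = f(S ∪ {e}) − f(S)`. -/
def marginal {V : Type*} [DecidableEq V] (f : Finset V → ℝ) (e : V) (S : Finset V) : ℝ :=
  f (insert e S) - f S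

/-- `f` is submodular: `Δ(e|B) ≤ Δ(e|A)` whenever `A ⊆ B` and `e ∉ B`. -/
def IsSubmodularFn {V : Type*} [DecidableEq V] (f : Finset V → ℝ) : Prop :=
  ∀ A B : Finset V, A ⊆ B → ∀ e : V, e ∉ B → marginal f e B ≤ marginal f e A

/-- The thresholding stream output `T_f(L, τ, N)`: fold over the list `L` starting from `∅`;
when processing `e` with current set `S`, add `e` if `Δ(e|S) ≥ τ` and `|S| < N`. -/
noncomputable def tstream {V : Type*} [DecidableEq V]
    (f : Finset V → ℝ) (τ : ℝ) (N : ℕ) (L : List V) : Finset V :=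
  L.foldl (fun S e => if marginal f e S ≥ τ ∧ S.card < N then insert e S else S) ∅

lemma tstream_aux_subset {V : Type*} [DecidableEq V]
    (f : Finset V → ℝ) (τ : ℝ) (N : ℕ) (L : List V) (S : Finset V) :
    S ⊆ L.foldl (fun S e => if marginal f e S ≥ τ ∧ S.card < N then insert e S else S) S := by
  induction L generalizing S with
  | nil => simp
  | cons a L ih =>
    simp only [List.foldl_cons]
    refine subset_trans ?_ (ih _)
    split
    · exact Finset.subset_insert _ _
    · exact subset_refl _

lemma tstream_aux {V : Type*} [DecidableEq V]
    (f : Finset V → ℝ) (hsub : IsSubmodularFn f) (τ : ℝ) (N : ℕ) (L : List V) (S : Finset V) :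
    ∀ e ∈ L, e ∉ L.foldl (fun S e => if marginal f e S ≥ τ ∧ S.card < N then insert e S else S) S →
      (L.foldl (fun S e => if marginal f e S ≥ τ ∧ S.card < N then insert e S else S) S).card < N →
      marginal f e (L.foldl (fun S e => if marginal f e S ≥ τ ∧ S.card < N then insert e S else S) S) < τ := by
  induction L generalizing S with
  | nil => simp
  | cons a L ih =>
    intro e he hnot hc
    simp only [List.foldl_cons] at hnot hc ⊢
    rcases List.mem_cons.mp he with rfl | he'
    · by_cases h : marginal f e S ≥ τ ∧ S.card < N
      · exfalso
        apply hnot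
        simp only [if_pos h]
        exact tstream_aux_subset f τ N L _ (Finset.mem_insert_self e S)
      · simp only [if_neg h] at hnot hc ⊢
        have hsub' : S ⊆ L.foldl
            (fun S e => if marginal f e S ≥ τ ∧ S.card < N then insert e S else S) S :=
          tstream_aux_subset f τ N L S
        have hcS : S.card < N := lt_of_le_of_lt (Finset.card_le_card hsub') hc
        have hm : ¬ marginal f e S ≥ τ := fun hge => h ⟨hge, hcS⟩
        exact lt_of_le_of_lt (hsub S _ hsub' e hnot) (lt_of_not_ge hm)
    · exact ih _ e he' hnot hc

/-- Thresholding stream invariant: if `f` is submodular and the output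
`S = T_f(L, τ, N)` satisfies `|S| < N`, then every element `e` of the stream `L`
with `e ∉ S` has marginal gain `Δ(e|S) < τ`. -/
theorem tstream_rejected_small_marginal
    {V : Type*} [Fintype V] [DecidableEq V] (f : Finset V → ℝ)
    (hsub : IsSubmodularFn f) (τ : ℝ) (N : ℕ) (L : List V)
    (hcard : (tstream f τ N L).card < N) :
    ∀ e ∈ L, e ∉ tstream f τ N L → marginal f e (tstream f τ N L) < τ := by
  intro e he hnot
  exact tstream_aux f hsub τ N L ∅ e he hnot hcard
end

section
/- One step of the offline greedy algorithm: Let f : Finset V → ℝ be monotone and submodular, let Q be a real number, and let S* ⊆ V be a nonempty finite set with f(S*) ≥ Q; set k* = |S*|. Let S ⊆ V be any finite set, and let e* ∈ V be an element maximizing the marginal gain with respect to S, i.e. Δ(e*|S) ≥ Δ(w|S) for all w ∈ V. Then Q − f(S ∪ {e*}) ≤ (1 − 1/k*)·(Q − f(S)). -/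
/-- `f` is monotone: `f(A) ≤ f(B)` whenever `A ⊆ B`. -/
def IsMonotoneFn {V : Type*} (f : Finset V → ℝ) : Prop :=
  ∀ A B : Finset V, A ⊆ B → f A ≤ f B

private lemma union_bound {V : Type*} [DecidableEq V] (f : Finset V → ℝ)
    (hmono : IsMonotoneFn f) (hsub : IsSubmodularFn f) (S : Finset V) (T : Finset V) :
    f (S ∪ T) - f S ≤ ∑ e ∈ T, marginal f e S := by
  induction T using Finset.induction_on with
  | empty => simp
  | @insert a T ha ih =>
    rw [Finset.sum_insert ha]
    have key : f (S ∪ insert a T) - f (S ∪ T) ≤ marginal f a S := by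
      by_cases h : a ∈ S ∪ T
      · have : S ∪ insert a T = S ∪ T := by
          rw [Finset.union_insert, Finset.insert_eq_self.mpr h]
        rw [this]
        simp only [sub_self]
        have := hmono S (insert a S) (Finset.subset_insert a S)
        simp [marginal]; linarith
      · have := hsub S (S ∪ T) Finset.subset_union_left a h
        simp only [marginal, Finset.union_insert] at *
        linarith
    linarith

/-- One step of the offline greedy algorithm: adding an element `e*` of maximal marginal
gain to `S` reduces the residual utility `Q − f(S)` by a factor `1 − 1/k*`. -/
theorem greedy_step
    {V : Type*} [Fintype V] [DecidableEq V] (f : Finset V → ℝ)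
    (hmono : IsMonotoneFn f) (hsub : IsSubmodularFn f)
    (Q : ℝ) (Sstar : Finset V) (hne : Sstar.Nonempty) (hcov : Q ≤ f Sstar)
    (S : Finset V) (estar : V)
    (hmax : ∀ w : V, marginal f w S ≤ marginal f estar S) :
    Q - f (insert estar S) ≤ (1 - 1 / (Sstar.card : ℝ)) * (Q - f S) := by
  have hk : (0 : ℝ) < (Sstar.card : ℝ) := by
    exact_mod_cast Finset.card_pos.mpr hne
  have h1 : f (S ∪ Sstar) - f S ≤ ∑ e ∈ Sstar, marginal f e S :=
    union_bound f hmono hsub S Sstar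
  have h2 : ∑ e ∈ Sstar, marginal f e S ≤ (Sstar.card : ℝ) * marginal f estar S := by
    calc ∑ e ∈ Sstar, marginal f e S ≤ ∑ _e ∈ Sstar, marginal f estar S :=
          Finset.sum_le_sum fun i _ => hmax i
      _ = (Sstar.card : ℝ) * marginal f estar S := by
          rw [Finset.sum_const, nsmul_eq_mul]
  have h3 : Q ≤ f (S ∪ Sstar) := le_trans hcov (hmono _ _ Finset.subset_union_right)
  have h4 : Q - f S ≤ (Sstar.card : ℝ) * marginal f estar S := by linarith
  have h5 : (Q - f S) / (Sstar.card : ℝ) ≤ marginal f estar S :=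
    (div_le_iff₀ hk).mpr (by linarith [h4, mul_comm (Sstar.card : ℝ) (marginal f estar S)])
  have hm : marginal f estar S = f (insert estar S) - f S := rfl
  have : Q - f (insert estar S) = (Q - f S) - marginal f estar S := by rw [hm]; ring
  rw [this, sub_mul, one_mul, div_mul_eq_mul_div, mul_comm, ← div_mul_eq_mul_div, ]
  have : (Q - f S) / (Sstar.card : ℝ) * 1 = (Q - f S) / (Sstar.card : ℝ) := by ring
  nlinarith [h5]
end

section
/- Claim 1, part 1 of the paper: If b(v_π) = true, then there exists a subfamily F' ⊆ F(π, b) of cardinality at most k whose union is all of X. (Namely, one can take the root set X \ C(w_1), the sets C(w_i) \ C(w_{i+1}) for 1 ≤ i ≤ k−2, and the leaf set C(w_{k−1}) = {v_π} × Fin ℓ.) -/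
/-- The cylinder of a word `w` over `Fin t` in the universe
`X = (Fin (k−1) → Fin t) × Fin l`: the pairs `(x, i)` such that the leaf `x` agrees
with `w` on the first `length w` coordinates. -/
def cylX (k t l : ℕ) (w : List (Fin t)) : Set ((Fin (k - 1) → Fin t) × Fin l) :=
  {p | ∀ i : Fin (k - 1), ∀ h : (i : ℕ) < w.length, p.1 i = w.get ⟨i, h⟩}

/-- The `π`-path words: `w_0 = []` and `w_{i+1} = w_i ++ [π(w_i)]`. -/
def pathWord {t : ℕ} (π : List (Fin t) → Fin t) : ℕ → List (Fin t)
  | 0 => []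
  | i + 1 => pathWord π i ++ [π (pathWord π i)]

/-- The leaf `v_π` determined by the `π`-path: `v_π(i) = π(w_i)`. -/
def pathLeaf (k t : ℕ) (π : List (Fin t) → Fin t) : Fin (k - 1) → Fin t :=
  fun i => π (pathWord π (i : ℕ))

lemma pathWord_length {t : ℕ} (π : List (Fin t) → Fin t) (n : ℕ) :
    (pathWord π n).length = n := by
  induction n with
  | zero => rfl
  | succ n ih => simp [pathWord, ih]

lemma pathWord_get {t : ℕ} (π : List (Fin t) → Fin t) (n j : ℕ)
    (h : j < (pathWord π n).length) :
    (pathWord π n).get ⟨j, h⟩ = π (pathWord π j) := by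
  induction n with
  | zero => simp [pathWord_length] at h
  | succ n ih =>
    have hj : j < n + 1 := by simpa [pathWord_length] using h
    rcases Nat.lt_or_ge j n with hlt | hge
    · have h' : j < (pathWord π n).length := by simpa [pathWord_length]
      simp only [pathWord, List.get_eq_getElem]
      rw [List.getElem_append_left h']
      simpa using ih h'
    · have hj' : j = n := le_antisymm (Nat.lt_succ_iff.mp hj) hge
      subst hj'
      simp only [pathWord, List.get_eq_getElem]
      rw [List.getElem_append_right (by simp [pathWord_length])]
      simp [pathWord_length]

lemma mem_cyl_pathWord {k t l : ℕ} (π : List (Fin t) → Fin t) (n : ℕ)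
    (p : (Fin (k - 1) → Fin t) × Fin l) :
    p ∈ cylX k t l (pathWord π n) ↔
      ∀ i : Fin (k - 1), (i : ℕ) < n → p.1 i = π (pathWord π (i : ℕ)) := by
  constructor
  · intro hp i hi
    have h : (i : ℕ) < (pathWord π n).length := by simpa [pathWord_length]
    rw [hp i h, pathWord_get]
  · intro hp i h
    rw [pathWord_get]
    exact hp i (by simpa [pathWord_length] using h)

lemma mem_cyl_ofFn {k t l : ℕ} (x : Fin (k - 1) → Fin t)
    (p : (Fin (k - 1) → Fin t) × Fin l) :
    p ∈ cylX k t l (List.ofFn x) ↔ ∀ i : Fin (k - 1), p.1 i = x i := by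
  constructor
  · intro hp i
    have h : (i : ℕ) < (List.ofFn x).length := by simp [i.2]
    rw [hp i h]
    simp
  · intro hp i h
    simp [hp i]

/-- The set family `F(π, b)`: (i) the root set `X \ C([π([])])`; (ii) the sets
`C(w) \ C(w ++ [π(w)])` for words `w` with `1 ≤ |w| ≤ k−2`; (iii) the leaf cylinders `C(x)`
for leaves `x` with `b(x) = true`; (iv) the singletons `{e}` for `e ∈ C([π([])])`. -/
def coverFamily (k t l : ℕ) (π : List (Fin t) → Fin t)
    (b : (Fin (k - 1) → Fin t) → Bool) : Set (Set ((Fin (k - 1) → Fin t) × Fin l)) :=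
  {S | S = Set.univ \ cylX k t l [π []]} ∪
  {S | ∃ w : List (Fin t), 1 ≤ w.length ∧ w.length ≤ k - 2 ∧
        S = cylX k t l w \ cylX k t l (w ++ [π w])} ∪
  {S | ∃ x : Fin (k - 1) → Fin t, b x = true ∧ S = cylX k t l (List.ofFn x)} ∪
  {S | ∃ e ∈ cylX k t l [π []], S = {e}}

/-- Claim 1, part 1 of the paper: if `b(v_π) = true`, then some subfamily of `F(π, b)`
of cardinality at most `k` covers all of `X`. -/
theorem cover_of_bit_true
    (k t l : ℕ) (hk : 2 ≤ k) (ht : 1 ≤ t) (hl : 1 ≤ l)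
    (π : List (Fin t) → Fin t) (b : (Fin (k - 1) → Fin t) → Bool)
    (hb : b (pathLeaf k t π) = true) :
    ∃ F' : Set (Set ((Fin (k - 1) → Fin t) × Fin l)),
      F' ⊆ coverFamily k t l π b ∧ F'.Finite ∧ F'.ncard ≤ k ∧ ⋃₀ F' = Set.univ := by
  classical
  set f : ℕ → Set ((Fin (k - 1) → Fin t) × Fin l) := fun n =>
    if n = 0 then Set.univ \ cylX k t l [π []]
    else if n = k - 1 then cylX k t l (List.ofFn (pathLeaf k t π))
    else cylX k t l (pathWord π n) \ cylX k t l (pathWord π (n + 1)) with hf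
  refine ⟨f '' Set.Iio k, ?_, ?_, ?_, ?_⟩
  · rintro S ⟨n, hn, rfl⟩
    simp only [Set.mem_Iio] at hn
    by_cases h0 : n = 0
    · left; left; left
      simp [hf, h0]
    by_cases hk1 : n = k - 1
    · left; right
      refine ⟨pathLeaf k t π, hb, ?_⟩
      subst hk1
      simp [hf, h0]
    · left; left; right
      refine ⟨pathWord π n, ?_, ?_, ?_⟩
      · simp [pathWord_length, Nat.one_le_iff_ne_zero, h0]
      · rw [pathWord_length]
        omega
      · simp only [hf, h0, hk1, if_false]
        rfl
  · exact (Set.finite_Iio k).image f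
  · calc (f '' Set.Iio k).ncard ≤ (Set.Iio k).ncard := Set.ncard_image_le (Set.finite_Iio k)
      _ = k := by rw [← Finset.coe_range, Set.ncard_coe_finset, Finset.card_range]
  · ext p
    simp only [Set.mem_sUnion, Set.mem_univ, iff_true]
    by_cases hall : ∀ i : Fin (k - 1), p.1 i = pathLeaf k t π i
    · refine ⟨f (k - 1), ⟨k - 1, by simp only [Set.mem_Iio]; omega, rfl⟩, ?_⟩
      have hne : k - 1 ≠ 0 := by omega
      simp only [hf, hne, if_false, if_pos rfl]
      exact (mem_cyl_ofFn _ p).mpr hall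
    · push_neg at hall
      have hex : ∃ n : ℕ, ∃ h : n < k - 1, p.1 ⟨n, h⟩ ≠ π (pathWord π n) := by
        obtain ⟨i, hi⟩ := hall
        exact ⟨i, i.2, by simpa [pathLeaf] using hi⟩
      set m := Nat.find hex with hm
      obtain ⟨hmlt, hmne⟩ := Nat.find_spec hex
      have hmin : ∀ j : Fin (k - 1), (j : ℕ) < m → p.1 j = π (pathWord π (j : ℕ)) := by
        intro j hj
        by_contra hcon
        exact Nat.find_min hex hj ⟨j.2, by simpa using hcon⟩
      have hpm : p ∈ cylX k t l (pathWord π m) := by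
        rw [mem_cyl_pathWord]
        exact hmin
      have hpm1 : p ∉ cylX k t l (pathWord π (m + 1)) := by
        rw [mem_cyl_pathWord]
        intro h
        exact hmne (h ⟨m, hmlt⟩ (Nat.lt_succ_self m))
      by_cases h0 : m = 0
      · refine ⟨f 0, ⟨0, by simp; omega, rfl⟩, ?_⟩
        simp only [hf, if_pos rfl, Set.mem_diff, Set.mem_univ, true_and]
        intro hc
        apply hpm1
        rw [h0]
        simpa [pathWord] using hc
      · refine ⟨f m, ⟨m, by simp; omega, rfl⟩, ?_⟩
        have hne1 : m ≠ k - 1 := by omega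
        simp only [hf, h0, hne1, if_false]
        exact ⟨hpm, hpm1⟩
end
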